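/- For the function g_z(h) = g(z + h, w) with g as the penalized expected phase retrieval objective, the gradient in the first block is Lipschitz: for all z, w with ‖w − x‖ ≤ (1/8)‖x‖ and all h ∈ ℝⁿ, ‖∇_z g(z + h, w) − ∇_z g(z, w)‖ ≤ (4‖x‖² + ρ)‖h‖. -/

import Mathlib

open scoped RealInnerProductSpace

variable {n : ℕ}

lemma grad_aux (x w : EuclideanSpace ℝ (Fin n)) (ρ : ℝ) (z : EuclideanSpace ℝ (Fin n)) :
    HasGradientAt (fun z' : EuclideanSpace ℝ (Fin n) =>
        (3 / 2) * ‖x‖ ^ 4 + ⟪w, z'⟫ ^ 2 + (1 / 2) * ‖z'‖ ^ 2 * ‖w‖ ^ 2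
        - 2 * ⟪x, z'⟫ * ⟪x, w⟫ - ‖x‖ ^ 2 * ⟪w, z'⟫ + (ρ / 2) * ‖z' - w‖ ^ 2)
      ((2 * ⟪w, z⟫) • w + (‖w‖ ^ 2) • z - (2 * ⟪x, w⟫) • x - (‖x‖ ^ 2) • w + ρ • (z - w)) z := by
  rw [hasGradientAt_iff_hasFDerivAt]
  have hwz : HasFDerivAt (fun z' : EuclideanSpace ℝ (Fin n) => ⟪w, z'⟫) (innerSL ℝ w) z :=
    (innerSL ℝ w).hasFDerivAt
  have hxz : HasFDerivAt (fun z' : EuclideanSpace ℝ (Fin n) => ⟪x, z'⟫) (innerSL ℝ x) z :=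
    (innerSL ℝ x).hasFDerivAt
  have hid : HasFDerivAt (fun z' : EuclideanSpace ℝ (Fin n) => z') (ContinuousLinearMap.id ℝ _) z :=
    hasFDerivAt_id z
  have hzz : HasFDerivAt (fun z' : EuclideanSpace ℝ (Fin n) => ⟪z', z'⟫)
      ((fderivInnerCLM ℝ (z, z)).comp ((ContinuousLinearMap.id ℝ _).prod (ContinuousLinearMap.id ℝ _))) z :=
    hid.inner ℝ hid
  have hsub : HasFDerivAt (fun z' : EuclideanSpace ℝ (Fin n) => z' - w) (ContinuousLinearMap.id ℝ _) z := by
    simpa using hid.sub_const w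
  have hzw : HasFDerivAt (fun z' : EuclideanSpace ℝ (Fin n) => ⟪z' - w, z' - w⟫)
      ((fderivInnerCLM ℝ (z - w, z - w)).comp ((ContinuousLinearMap.id ℝ _).prod (ContinuousLinearMap.id ℝ _))) z :=
    hsub.inner ℝ hsub
  have key : HasFDerivAt (fun z' : EuclideanSpace ℝ (Fin n) =>
      (3 / 2) * ‖x‖ ^ 4 + ⟪w, z'⟫ ^ 2 + (1 / 2) * ⟪z', z'⟫ * ‖w‖ ^ 2
        - 2 * ⟪x, z'⟫ * ⟪x, w⟫ - ‖x‖ ^ 2 * ⟪w, z'⟫ + (ρ / 2) * ⟪z' - w, z' - w⟫)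
      ((2 * ⟪w, z⟫) • innerSL ℝ w
        + ((1/2) * ‖w‖ ^ 2) • ((fderivInnerCLM ℝ (z, z)).comp ((ContinuousLinearMap.id ℝ _).prod (ContinuousLinearMap.id ℝ _)))
        - (2 * ⟪x, w⟫) • innerSL ℝ x - (‖x‖ ^ 2) • innerSL ℝ w
        + (ρ / 2) • ((fderivInnerCLM ℝ (z - w, z - w)).comp ((ContinuousLinearMap.id ℝ _).prod (ContinuousLinearMap.id ℝ _)))) z := by
    have h1 : HasFDerivAt (fun z' : EuclideanSpace ℝ (Fin n) => ⟪w, z'⟫ ^ 2)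
        ((2 * ⟪w, z⟫) • innerSL ℝ w) z := by
      have := hwz.mul hwz
      rw [two_mul, add_smul]
      exact this.congr_of_eventuallyEq (Filter.Eventually.of_forall fun z' => by simp [pow_two])
    have h2 : HasFDerivAt (fun z' : EuclideanSpace ℝ (Fin n) => (1/2) * ⟪z', z'⟫ * ‖w‖ ^ 2)
        (((1/2) * ‖w‖ ^ 2) • ((fderivInnerCLM ℝ ((z : EuclideanSpace ℝ (Fin n)), z)).comp ((ContinuousLinearMap.id ℝ _).prod (ContinuousLinearMap.id ℝ _)))) z := by
      have := hzz.const_mul ((1/2) * ‖w‖ ^ 2)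
      exact this.congr_of_eventuallyEq (Filter.Eventually.of_forall fun z' => by ring)
    have h3 : HasFDerivAt (fun z' : EuclideanSpace ℝ (Fin n) => 2 * ⟪x, z'⟫ * ⟪x, w⟫)
        ((2 * ⟪x, w⟫) • innerSL ℝ x) z := by
      have := hxz.const_mul (2 * ⟪x, w⟫)
      exact this.congr_of_eventuallyEq (Filter.Eventually.of_forall fun z' => by ring)
    have h4 := hwz.const_mul (‖x‖ ^ 2)
    have h5 := hzw.const_mul (ρ / 2)
    exact ((((h1.const_add _).add h2).sub h3).sub h4).add h5
  have heq : (fun z' : EuclideanSpace ℝ (Fin n) =>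
      (3 / 2) * ‖x‖ ^ 4 + ⟪w, z'⟫ ^ 2 + (1 / 2) * ‖z'‖ ^ 2 * ‖w‖ ^ 2
        - 2 * ⟪x, z'⟫ * ⟪x, w⟫ - ‖x‖ ^ 2 * ⟪w, z'⟫ + (ρ / 2) * ‖z' - w‖ ^ 2) =
      (fun z' : EuclideanSpace ℝ (Fin n) =>
      (3 / 2) * ‖x‖ ^ 4 + ⟪w, z'⟫ ^ 2 + (1 / 2) * ⟪z', z'⟫ * ‖w‖ ^ 2
        - 2 * ⟪x, z'⟫ * ⟪x, w⟫ - ‖x‖ ^ 2 * ⟪w, z'⟫ + (ρ / 2) * ⟪z' - w, z' - w⟫) := by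
    funext z'; rw [real_inner_self_eq_norm_sq, real_inner_self_eq_norm_sq]
  rw [heq]
  refine key.congr_fderiv ?_
  ext v
  simp only [InnerProductSpace.toDual_apply_apply, ContinuousLinearMap.add_apply,
    ContinuousLinearMap.sub_apply, ContinuousLinearMap.smul_apply, ContinuousLinearMap.comp_apply,
    ContinuousLinearMap.prod_apply, ContinuousLinearMap.id_apply, fderivInnerCLM_apply,
    innerSL_apply_apply, smul_eq_mul, inner_add_left, inner_sub_left, inner_sub_right,
    real_inner_smul_left]
  rw [real_inner_comm v z, real_inner_comm v w]
  ring

theorem stmt_5 {n : ℕ} (x : EuclideanSpace ℝ (Fin n)) (ρ : ℝ) (hρ : 0 ≤ ρ)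
    (g : EuclideanSpace ℝ (Fin n) → EuclideanSpace ℝ (Fin n) → ℝ)
    (hg : g = fun z w => (3 / 2) * ‖x‖ ^ 4 + ⟪w, z⟫ ^ 2 + (1 / 2) * ‖z‖ ^ 2 * ‖w‖ ^ 2
        - 2 * ⟪x, z⟫ * ⟪x, w⟫ - ‖x‖ ^ 2 * ⟪w, z⟫ + (ρ / 2) * ‖z - w‖ ^ 2)
    (z w h : EuclideanSpace ℝ (Fin n)) (hw : ‖w - x‖ ≤ (1 / 8) * ‖x‖) :
    ‖gradient (fun z' => g z' w) (z + h) - gradient (fun z' => g z' w) z‖ ≤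
      (4 * ‖x‖ ^ 2 + ρ) * ‖h‖ := by
  subst hg
  have G1 := (grad_aux x w ρ (z + h)).gradient
  have G2 := (grad_aux x w ρ z).gradient
  rw [G1, G2]
  have e : ((2 * ⟪w, z + h⟫) • w + (‖w‖ ^ 2) • (z + h) - (2 * ⟪x, w⟫) • x - (‖x‖ ^ 2) • w
        + ρ • (z + h - w)) -
      ((2 * ⟪w, z⟫) • w + (‖w‖ ^ 2) • z - (2 * ⟪x, w⟫) • x - (‖x‖ ^ 2) • w + ρ • (z - w)) =
      (2 * ⟪w, h⟫) • w + (‖w‖ ^ 2) • h + ρ • h := by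
    simp only [inner_add_right]
    module
  rw [e]
  have hbw : ‖w‖ ≤ (9 / 8) * ‖x‖ := by
    have := norm_sub_norm_le w x
    linarith [le_trans this hw]
  have hx0 : (0:ℝ) ≤ ‖x‖ := norm_nonneg x
  have hh0 : (0:ℝ) ≤ ‖h‖ := norm_nonneg h
  have hw0 : (0:ℝ) ≤ ‖w‖ := norm_nonneg w
  have hin : |⟪w, h⟫| ≤ ‖w‖ * ‖h‖ := abs_real_inner_le_norm w h
  calc ‖(2 * ⟪w, h⟫) • w + (‖w‖ ^ 2) • h + ρ • h‖
      ≤ ‖(2 * ⟪w, h⟫) • w‖ + ‖(‖w‖ ^ 2) • h‖ + ‖ρ • h‖ := norm_add₃_le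
    _ = |2 * ⟪w, h⟫| * ‖w‖ + |‖w‖ ^ 2| * ‖h‖ + |ρ| * ‖h‖ := by
        rw [norm_smul, norm_smul, norm_smul, Real.norm_eq_abs, Real.norm_eq_abs, Real.norm_eq_abs]
    _ ≤ (4 * ‖x‖ ^ 2 + ρ) * ‖h‖ := by
        rw [abs_mul, abs_two, abs_of_nonneg (by positivity : (0:ℝ) ≤ ‖w‖ ^ 2),
          abs_of_nonneg hρ]
        nlinarith [abs_nonneg ⟪w, h⟫, mul_le_mul_of_nonneg_right hin hw0,
          mul_le_mul hbw hbw hw0 (by positivity)]
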